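/- Let X be an n×p real matrix and S an r×n selection matrix, and define X* = S·X, x̄ = n⁻¹·Xᵀ·1_n, x̄* = r⁻¹·X*ᵀ·1_r, X_c* = X* − 1_r·x̄ᵀ, X_cr* = X* − 1_r·x̄*ᵀ. Assume X_cr*ᵀ·X_cr* is positive definite (equivalently, Z* = (1_r X*) has full column rank). Then X_c*ᵀ·X_c* is also positive definite, and the scalar d = r·(x̄* − x̄)ᵀ·(X_c*ᵀ·X_c*)⁻¹·(x̄* − x̄) satisfies d < 1. -/

import Mathlib

open Matrix

/-- In the setting of subsample centering, if `X_cr*ᵀX_cr*` is positive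
definite, then `X_c*ᵀX_c*` is positive definite and
`d = r(x̄* − x̄)ᵀ(X_c*ᵀX_c*)⁻¹(x̄* − x̄) < 1`. -/
theorem subsample_centering_d_lt_one (n r p : ℕ) (hn : 1 ≤ n) (hr : 1 ≤ r)
    (X : Matrix (Fin n) (Fin p) ℝ)
    (S : Matrix (Fin r) (Fin n) ℝ)
    (hS : ∃ φ : Fin r → Fin n, Function.Injective φ ∧
      ∀ i j, S i j = if j = φ i then 1 else 0)
    (Xstar : Matrix (Fin r) (Fin p) ℝ) (hXstar : Xstar = S * X)
    (xbar : Fin p → ℝ) (hxbar : xbar = (n : ℝ)⁻¹ • (Xᵀ *ᵥ (1 : Fin n → ℝ)))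
    (xbarstar : Fin p → ℝ)
    (hxbarstar : xbarstar = (r : ℝ)⁻¹ • (Xstarᵀ *ᵥ (1 : Fin r → ℝ)))
    (Xc : Matrix (Fin r) (Fin p) ℝ)
    (hXc : Xc = Xstar - vecMulVec (1 : Fin r → ℝ) xbar)
    (Xcr : Matrix (Fin r) (Fin p) ℝ)
    (hXcr : Xcr = Xstar - vecMulVec (1 : Fin r → ℝ) xbarstar)
    (hpd : (Xcrᵀ * Xcr).PosDef)
    (d : ℝ)
    (hd : d = (r : ℝ) * ((xbarstar - xbar) ⬝ᵥ ((Xcᵀ * Xc)⁻¹ *ᵥ (xbarstar - xbar)))) :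
    (Xcᵀ * Xc).PosDef ∧ d < 1 := by
  have hr0 : (0 : ℝ) < r := by exact_mod_cast hr
  set δ : Fin p → ℝ := xbarstar - xbar with hδ
  -- Xcr is centered: column sums vanish
  have hcol : ∀ j, ∑ i, Xcr i j = 0 := by
    intro j
    have hx : xbarstar j = (r : ℝ)⁻¹ * ∑ i, Xstar i j := by
      simp [hxbarstar, mulVec, dotProduct]
    simp only [hXcr, Matrix.sub_apply, vecMulVec_apply, Pi.one_apply, one_mul,
      Finset.sum_sub_distrib, Finset.sum_const, Finset.card_univ, Fintype.card_fin,
      nsmul_eq_mul, hx]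
    field_simp
    ring
  have h0 : ∀ v : Fin p → ℝ, (1 : Fin r → ℝ) ⬝ᵥ (Xcr *ᵥ v) = 0 := by
    intro v
    simp only [dotProduct, mulVec, Pi.one_apply, one_mul]
    rw [Finset.sum_comm]
    simp [← Finset.sum_mul, hcol]
  -- decomposition of Xc *ᵥ v
  have hdec : ∀ v : Fin p → ℝ,
      Xc *ᵥ v = Xcr *ᵥ v + (δ ⬝ᵥ v) • (1 : Fin r → ℝ) := by
    intro v
    funext i
    simp only [hXc, hXcr, sub_mulVec, Pi.add_apply, Pi.sub_apply, Pi.smul_apply,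
      Pi.one_apply, smul_eq_mul, mul_one, mulVec, dotProduct, vecMulVec_apply,
      Pi.one_apply, one_mul, hδ, Pi.sub_apply, Matrix.sub_apply]
    rw [← Finset.sum_sub_distrib, ← Finset.sum_add_distrib]
    exact Finset.sum_congr rfl fun x _ => by ring
  -- quadratic form identity
  have hQself : ∀ (M : Matrix (Fin r) (Fin p) ℝ) (v : Fin p → ℝ),
      v ⬝ᵥ ((Mᵀ * M) *ᵥ v) = (M *ᵥ v) ⬝ᵥ (M *ᵥ v) := by
    intro M v
    rw [← mulVec_mulVec, dotProduct_mulVec, vecMul_transpose]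
  have hone : (1 : Fin r → ℝ) ⬝ᵥ (1 : Fin r → ℝ) = (r : ℝ) := by
    simp [dotProduct]
  have hQ : ∀ v : Fin p → ℝ,
      v ⬝ᵥ ((Xcᵀ * Xc) *ᵥ v)
        = v ⬝ᵥ ((Xcrᵀ * Xcr) *ᵥ v) + (r : ℝ) * (δ ⬝ᵥ v) ^ 2 := by
    intro v
    rw [hQself, hQself, hdec v]
    rw [dotProduct_add, add_dotProduct, add_dotProduct,
      dotProduct_smul, smul_dotProduct, smul_dotProduct, dotProduct_smul]
    have h1 : (Xcr *ᵥ v) ⬝ᵥ (1 : Fin r → ℝ) = 0 := by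
      rw [dotProduct_comm]; exact h0 v
    rw [h1, h0 v, hone]
    simp [smul_eq_mul]
    ring
  have hstar : ∀ v : Fin p → ℝ, star v = v := fun v => by
    funext i; simp
  -- positive definiteness of Xcᵀ * Xc
  have hApd : (Xcᵀ * Xc).PosDef := by
    refine Matrix.PosDef.of_dotProduct_mulVec_pos ?_ ?_
    · rw [IsHermitian, conjTranspose_eq_transpose_of_trivial, transpose_mul, transpose_transpose]
    · intro v hv
      rw [hstar, hQ v]
      have h1 : 0 < v ⬝ᵥ ((Xcrᵀ * Xcr) *ᵥ v) := by
        have := hpd.dotProduct_mulVec_pos hv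
        rwa [hstar] at this
      nlinarith [sq_nonneg (δ ⬝ᵥ v)]
  refine ⟨hApd, ?_⟩
  -- A is invertible
  have hdet : IsUnit (Xcᵀ * Xc).det := hApd.det_pos.ne'.isUnit
  set w : Fin p → ℝ := (Xcᵀ * Xc)⁻¹ *ᵥ δ with hw
  have hAw : (Xcᵀ * Xc) *ᵥ w = δ := by
    rw [hw, mulVec_mulVec, Matrix.mul_nonsing_inv _ hdet, one_mulVec]
  have ht : δ ⬝ᵥ w = w ⬝ᵥ ((Xcᵀ * Xc) *ᵥ w) := by
    rw [hAw, dotProduct_comm]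
  have hq : d = (r : ℝ) * (w ⬝ᵥ ((Xcrᵀ * Xcr) *ᵥ w)) + d ^ 2 := by
    have := hQ w
    rw [← ht] at this
    rw [hd]
    rw [hd] at *
    nlinarith [this]
  by_cases hw0 : w = 0
  · have hd0 : d = 0 := by
      rw [hd, show w = 0 from hw0]
      simp
    linarith
  · have hqpos : 0 < w ⬝ᵥ ((Xcrᵀ * Xcr) *ᵥ w) := by
      have := hpd.dotProduct_mulVec_pos hw0
      rwa [hstar] at this
    nlinarith [hq, hqpos, hr0]
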